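/- Let τ, K > 0 and let W ∈ ℂ^{N×K} with all entries of modulus √β, Q = W W^H, w̄₁ = ∑_{k=1}^K [W]_{1,k}, and κ = sqrt(τ² + 4L|w̄₁|²) where τ = σ²_n/(ρσ²) + tr(Q) + (L−1)[Q]_{1,1} − K with σ_n, ρ, σ > 0. Then all three quantities K + (τ−κ)/2, K + (τ+κ)/2, and K + τ − L[Q]_{1,1} are strictly positive. -/

import Mathlib

open Matrix Finset

/-- The three eigenvalues K+(τ−κ)/2, K+(τ+κ)/2, K+τ−L[Q]₁₁ of the Bayesian FIM
(scaled) are strictly positive, where W has constant-modulus entries √β,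
Q = W Wᴴ, w̄₁ = ∑_k [W]_{1,k}, τ = σn²/(ρσ²)+tr(Q)+(L−1)[Q]₁₁−K
and κ = √(τ²+4L|w̄₁|²). -/
theorem bayes_fim_eigenvalues_pos (N K L : ℕ) (hN : 2 ≤ N) (hK : 1 ≤ K) (hL : 1 ≤ L)
    (β ρ σ σn : ℝ) (hβ : 0 < β) (hρ : 0 < ρ) (hσ : 0 < σ) (hσn : 0 < σn)
    (W : Matrix (Fin N) (Fin K) ℂ)
    (hW : ∀ i k, ‖W i k‖ = Real.sqrt β)
    (Q : Matrix (Fin N) (Fin N) ℂ) (hQ : Q = W * Wᴴ)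
    (w1 : ℂ) (hw1 : w1 = ∑ k, W ⟨0, by omega⟩ k)
    (τ : ℝ)
    (hτ : τ = σn ^ 2 / (ρ * σ ^ 2) + Q.trace.re +
        ((L : ℝ) - 1) * (Q ⟨0, by omega⟩ ⟨0, by omega⟩).re - K)
    (κ : ℝ) (hκ : κ = Real.sqrt (τ ^ 2 + 4 * L * ‖w1‖ ^ 2)) :
    0 < (K : ℝ) + (τ - κ) / 2 ∧ 0 < (K : ℝ) + (τ + κ) / 2 ∧
      0 < (K : ℝ) + τ - (L : ℝ) * (Q ⟨0, by omega⟩ ⟨0, by omega⟩).re := by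
  have hdiag : ∀ i : Fin N, (Q i i).re = K * β := by
    intro i
    have : Q i i = ∑ k, W i k * star (W i k) := by
      simp [hQ, Matrix.mul_apply, Matrix.conjTranspose_apply]
    rw [this]
    rw [Complex.re_sum]
    have : ∀ k : Fin K, (W i k * star (W i k)).re = β := by
      intro k
      rw [show star (W i k) = (starRingEnd ℂ) (W i k) from rfl, Complex.mul_conj]
      simp [Complex.normSq_eq_norm_sq, hW i k, Real.sq_sqrt hβ.le]
    rw [Finset.sum_congr rfl (fun k _ => this k)]
    simp [mul_comm]
  have htr : Q.trace.re = N * (K * β) := by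
    rw [Matrix.trace, Complex.re_sum]
    simp [Matrix.diag, hdiag, mul_comm]
  have hc : 0 < σn ^ 2 / (ρ * σ ^ 2) := by positivity
  set c := σn ^ 2 / (ρ * σ ^ 2)
  have hQ11 : (Q ⟨0, by omega⟩ ⟨0, by omega⟩).re = K * β := hdiag _
  have hτ' : τ = c + N * (K * β) + ((L : ℝ) - 1) * (K * β) - K := by
    rw [hτ, htr, hQ11]
  have hw1b : ‖w1‖ ≤ K * Real.sqrt β := by
    rw [hw1]
    calc ‖∑ k, W ⟨0, by omega⟩ k‖ ≤ ∑ k, ‖W ⟨0, by omega⟩ k‖ := by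
          exact norm_sum_le _ _
      _ = K * Real.sqrt β := by simp [hW]
  have hw1sq : ‖w1‖ ^ 2 ≤ K ^ 2 * β := by
    have h1 : (0:ℝ) ≤ ‖w1‖ := norm_nonneg _
    have h2 : ‖w1‖ ^ 2 ≤ (K * Real.sqrt β) ^ 2 := by
      exact pow_le_pow_left₀ h1 hw1b 2
    calc ‖w1‖ ^ 2 ≤ (K * Real.sqrt β) ^ 2 := h2
      _ = K ^ 2 * β := by rw [mul_pow, Real.sq_sqrt hβ.le]
  have hN' : (2:ℝ) ≤ N := by exact_mod_cast hN
  have hK' : (1:ℝ) ≤ K := by exact_mod_cast hK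
  have hL' : (1:ℝ) ≤ L := by exact_mod_cast hL
  have hκ0 : 0 ≤ κ := hκ ▸ Real.sqrt_nonneg _
  have h2Kτ : 0 < 2 * K + τ := by nlinarith
  have hκlt : κ < 2 * K + τ := by
    rw [hκ]
    rw [Real.sqrt_lt' h2Kτ]
    nlinarith
  refine ⟨by linarith, by linarith, ?_⟩
  rw [hQ11]
  nlinarith
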